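/- Let g,d ∈ ℕ* and (a_{−g},…,a_d) ∈ [0,1]^{g+d+1} with a_{−g} > 0, a_d > 0, ∑_{k=−g}^{d} a_k = 1 and ∑_{k=−g}^{d} k·a_k < 0. Then for every λ ∈ ℂ with δ̂ < |λ| < 1, the polynomial E_λ has no root of modulus exactly γ̂; that is, if z ∈ ℂ satisfies E_λ(z) = 0 then |z| ≠ γ̂, so every root satisfies |z| < γ̂ or |z| > γ̂. -/

import Mathlib

/-- `φ(t) := ∑_{k=-g}^{d} a_k t^k`. -/
noncomputable def phiF (g d : ℕ) (a : ℤ → ℝ) (t : ℝ) : ℝ :=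
  ∑ k ∈ Finset.Icc (-(g : ℤ)) (d : ℤ), a k * t ^ k

/-- The polynomial `E_λ(z) := ∑_{k=-g}^{d} a_k z^{g+k} - λ z^g`. -/
noncomputable def Epoly (g d : ℕ) (a : ℤ → ℝ) (lam : ℂ) : Polynomial ℂ :=
  (∑ k ∈ Finset.Icc (-(g : ℤ)) (d : ℤ),
      Polynomial.C ((a k : ℝ) : ℂ) * Polynomial.X ^ ((g : ℤ) + k).toNat)
    - Polynomial.C lam * Polynomial.X ^ g

/-- for `λ` in the annulus `δ̂ < |λ| < 1`, where `γ̂` is the minimizer of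
`φ` on `(1,∞)` and `δ̂ := φ(γ̂)`, the polynomial `E_λ` has no root of modulus exactly
`γ̂`: every root satisfies `|z| < γ̂` or `|z| > γ̂`. -/
theorem no_root_of_modulus_gammahat
    (g d : ℕ) (hg : 1 ≤ g) (hd : 1 ≤ d) (a : ℤ → ℝ)
    (ha01 : ∀ k ∈ Finset.Icc (-(g : ℤ)) (d : ℤ), 0 ≤ a k ∧ a k ≤ 1)
    (hag : 0 < a (-(g : ℤ))) (had : 0 < a (d : ℤ))
    (hsum : ∑ k ∈ Finset.Icc (-(g : ℤ)) (d : ℤ), a k = 1)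
    (hneri : ∑ k ∈ Finset.Icc (-(g : ℤ)) (d : ℤ), (k : ℝ) * a k < 0)
    (γhat : ℝ) (hγhat1 : 1 < γhat)
    (hγhatmin : ∀ t : ℝ, 1 < t → phiF g d a γhat ≤ phiF g d a t) :
    ∀ lam : ℂ, phiF g d a γhat < ‖lam‖ → ‖lam‖ < 1 →
      ∀ z : ℂ, (Epoly g d a lam).eval z = 0 →
        ‖z‖ ≠ γhat ∧ (‖z‖ < γhat ∨ γhat < ‖z‖) := by
  intro lam hlo hhi z hz
  have hγpos : (0:ℝ) < γhat := lt_trans one_pos hγhat1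
  have hne : ‖z‖ ≠ γhat := by
    intro habs
    -- rewrite the root equation
    have heval : (∑ k ∈ Finset.Icc (-(g:ℤ)) (d:ℤ),
        ((a k : ℂ)) * z ^ ((g:ℤ) + k).toNat) = lam * z ^ g := by
      have h := hz
      simp only [Epoly, Polynomial.eval_sub, Polynomial.eval_finset_sum,
        Polynomial.eval_mul, Polynomial.eval_pow, Polynomial.eval_C,
        Polynomial.eval_X] at h
      exact sub_eq_zero.mp h
    -- take absolute values
    have habs1 : ‖lam‖ * γhat ^ g
        ≤ ∑ k ∈ Finset.Icc (-(g:ℤ)) (d:ℤ), a k * γhat ^ ((g:ℤ) + k).toNat := by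
      calc ‖lam‖ * γhat ^ g
          = ‖lam * z ^ g‖ := by
            rw [norm_mul, norm_pow, habs]
        _ = ‖∑ k ∈ Finset.Icc (-(g:ℤ)) (d:ℤ),
              ((a k : ℂ)) * z ^ ((g:ℤ) + k).toNat‖ := by rw [heval]
        _ ≤ ∑ k ∈ Finset.Icc (-(g:ℤ)) (d:ℤ),
              ‖((a k : ℂ)) * z ^ ((g:ℤ) + k).toNat‖ :=
            norm_sum_le _ _
        _ = ∑ k ∈ Finset.Icc (-(g:ℤ)) (d:ℤ), a k * γhat ^ ((g:ℤ) + k).toNat := by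
            refine Finset.sum_congr rfl fun k hk => ?_
            rw [norm_mul, norm_pow, habs, Complex.norm_real, Real.norm_eq_abs,
              abs_of_nonneg (ha01 k hk).1]
    -- identify the sum with phiF * γhat ^ g
    have hsum2 : (∑ k ∈ Finset.Icc (-(g:ℤ)) (d:ℤ), a k * γhat ^ ((g:ℤ) + k).toNat)
        = phiF g d a γhat * γhat ^ g := by
      rw [phiF, Finset.sum_mul]
      refine Finset.sum_congr rfl fun k hk => ?_
      have hk1 : -(g:ℤ) ≤ k := (Finset.mem_Icc.mp hk).1
      have hnn : (0:ℤ) ≤ (g:ℤ) + k := by linarith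
      rw [mul_assoc, ← zpow_natCast γhat g, ← zpow_add₀ (ne_of_gt hγpos),
        ← zpow_natCast γhat ((g:ℤ) + k).toNat, Int.toNat_of_nonneg hnn, add_comm]
    rw [hsum2] at habs1
    have hγg : (0:ℝ) < γhat ^ g := pow_pos hγpos g
    have : ‖lam‖ ≤ phiF g d a γhat :=
      le_of_mul_le_mul_right (by linarith) hγg
    linarith
  exact ⟨hne, hne.lt_or_gt⟩
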